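/- arXiv:2310.18465 — 6 statements merged into one kernel-verified Lean document; each statement's English description precedes it below -/
import Mathlib

section
/- If f is a monotone nondecreasing submodular set function on [n] with f(∅)=0, S* is a set of size at most k maximizing f among sets of size at most k, and S^(0)=∅ ⊂ S^(1) ⊂ ... ⊂ S^(k) is a chain with |S^(i)|=i such that at each step i the added element is ε_i-greedy, i.e. max_{a∉S^(i-1)} f(S^(i-1)∪{a}) − f(S^(i)) ≤ ε_i with ε_i ≥ 0, then f(S^(k)) + Σ_{i=1}^k ε_i ≥ (1 − (1 − 1/k)^k) · f(S*) ≥ (1 − e^{-1}) · f(S*). -/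
/-- Submodularity in marginal form: marginal gains decrease as the set grows. -/
lemma marg_aux {n : ℕ} (f : Finset (Fin n) → ℝ)
    (hmono : ∀ A B : Finset (Fin n), A ⊆ B → f A ≤ f B)
    (hsub : ∀ A B : Finset (Fin n), f (A ∪ B) + f (A ∩ B) ≤ f A + f B)
    (A X : Finset (Fin n)) (hAX : A ⊆ X) (b : Fin n) :
    f (insert b X) - f X ≤ f (insert b A) - f A := by
  have hU : X ∪ insert b A = insert b X := by
    ext x; simp only [Finset.mem_union, Finset.mem_insert]
    constructor
    · rintro (h | h | h)
      · exact Or.inr h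
      · exact Or.inl h
      · exact Or.inr (hAX h)
    · rintro (h | h)
      · exact Or.inr (Or.inl h)
      · exact Or.inl h
  have hI : A ⊆ X ∩ insert b A := by
    intro x hx
    exact Finset.mem_inter.2 ⟨hAX hx, Finset.mem_insert_of_mem hx⟩
  have h1 := hsub X (insert b A)
  have h2 := hmono A (X ∩ insert b A) hI
  rw [hU] at h1
  linarith

/-- Bounding the gain of a union by the sum of single-element marginal gains. -/
lemma sum_aux {n : ℕ} (f : Finset (Fin n) → ℝ)
    (hmono : ∀ A B : Finset (Fin n), A ⊆ B → f A ≤ f B)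
    (hsub : ∀ A B : Finset (Fin n), f (A ∪ B) + f (A ∩ B) ≤ f A + f B)
    (A : Finset (Fin n)) (T : Finset (Fin n)) :
    f (A ∪ T) ≤ f A + ∑ a ∈ T \ A, (f (insert a A) - f A) := by
  induction T using Finset.induction with
  | empty => simp
  | insert _ _ hb ih =>
    rename_i b T'
    by_cases hbA : b ∈ A
    · have h1 : A ∪ insert b T' = A ∪ T' := by
        ext x; simp only [Finset.mem_union, Finset.mem_insert]
        constructor
        · rintro (h | h | h)
          · exact Or.inl h
          · exact Or.inl (h ▸ hbA)
          · exact Or.inr h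
        · rintro (h | h)
          · exact Or.inl h
          · exact Or.inr (Or.inr h)
      have h2 : insert b T' \ A = T' \ A := by
        ext x; simp only [Finset.mem_sdiff, Finset.mem_insert]
        constructor
        · rintro ⟨h | h, hx⟩
          · exact absurd (h ▸ hbA) hx
          · exact ⟨h, hx⟩
        · rintro ⟨h, hx⟩; exact ⟨Or.inr h, hx⟩
      rw [h1, h2]; exact ih
    · have h1 : A ∪ insert b T' = insert b (A ∪ T') := by
        ext x; simp only [Finset.mem_union, Finset.mem_insert]; tauto
      have h2 : insert b T' \ A = insert b (T' \ A) := by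
        ext x; simp only [Finset.mem_sdiff, Finset.mem_insert]
        constructor
        · rintro ⟨h | h, hx⟩
          · exact Or.inl h
          · exact Or.inr ⟨h, hx⟩
        · rintro (h | ⟨h, hx⟩)
          · exact ⟨Or.inl h, h ▸ hbA⟩
          · exact ⟨Or.inr h, hx⟩
      have hbT : b ∉ T' \ A := fun h => hb (Finset.mem_sdiff.1 h).1
      rw [h1, h2, Finset.sum_insert hbT]
      have hm := marg_aux f hmono hsub A (A ∪ T') Finset.subset_union_left b
      linarith

/-- approximate-greedy guarantee for monotone submodular maximization. -/
theorem stmt_0 (n k : ℕ) (hk : 1 ≤ k) (f : Finset (Fin n) → ℝ)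
    (hmono : ∀ A B : Finset (Fin n), A ⊆ B → f A ≤ f B)
    (hsub : ∀ A B : Finset (Fin n), f (A ∪ B) + f (A ∩ B) ≤ f A + f B)
    (hempty : f ∅ = 0)
    (Sstar : Finset (Fin n)) (hSstar : Sstar.card ≤ k)
    (hopt : ∀ S : Finset (Fin n), S.card ≤ k → f S ≤ f Sstar)
    (S : ℕ → Finset (Fin n)) (hS0 : S 0 = ∅)
    (hScard : ∀ i ≤ k, (S i).card = i)
    (hchain : ∀ i < k, S i ⊆ S (i + 1))
    (ε : ℕ → ℝ) (hε : ∀ i, 1 ≤ i → i ≤ k → 0 ≤ ε i)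
    (hgreedy : ∀ i, 1 ≤ i → i ≤ k →
      ∀ a ∉ S (i - 1), f (insert a (S (i - 1))) - f (S i) ≤ ε i) :
    f (S k) + ∑ i ∈ Finset.Icc 1 k, ε i ≥ (1 - (1 - 1 / (k : ℝ)) ^ k) * f Sstar ∧
      (1 - (1 - 1 / (k : ℝ)) ^ k) * f Sstar ≥ (1 - Real.exp (-1)) * f Sstar := by
  have hkpos : (0:ℝ) < k := by exact_mod_cast hk
  have hkne : (k:ℝ) ≠ 0 := ne_of_gt hkpos
  obtain ⟨c, hc⟩ : ∃ c : ℝ, c = 1 - 1 / (k:ℝ) := ⟨_, rfl⟩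
  rw [← hc]
  have hc0 : 0 ≤ c := by
    have h : 1 / (k:ℝ) ≤ 1 := by
      rw [div_le_one hkpos]; exact_mod_cast hk
    rw [hc]; linarith
  have hc1 : c ≤ 1 := by
    have : 0 < 1 / (k:ℝ) := by positivity
    rw [hc]; linarith
  have hFnn : 0 ≤ f Sstar := by
    have := hmono ∅ Sstar (Finset.empty_subset _)
    linarith [hempty ▸ this]
  -- per-step inequality
  have step : ∀ i < k, f Sstar - f (S i) ≤ (k:ℝ) * (f (S (i+1)) - f (S i) + ε (i+1)) := by
    intro i hik
    have h1 : f Sstar ≤ f (S i ∪ Sstar) := hmono _ _ Finset.subset_union_right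
    have h2 := sum_aux f hmono hsub (S i) Sstar
    have hchain' := hchain i hik
    have hmon : f (S i) ≤ f (S (i+1)) := hmono _ _ hchain'
    have hεnn : 0 ≤ ε (i+1) := hε (i+1) (Nat.le_add_left 1 i) hik
    have hbd : ∀ a ∈ Sstar \ S i, f (insert a (S i)) - f (S i) ≤
        f (S (i+1)) - f (S i) + ε (i+1) := by
      intro a ha
      have haS : a ∉ S i := (Finset.mem_sdiff.1 ha).2
      have := hgreedy (i+1) (Nat.le_add_left 1 i) hik a (by simpa using haS)
      simp only [Nat.add_sub_cancel] at this
      linarith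
    have hsum : ∑ a ∈ Sstar \ S i, (f (insert a (S i)) - f (S i)) ≤
        ((Sstar \ S i).card : ℝ) * (f (S (i+1)) - f (S i) + ε (i+1)) := by
      calc ∑ a ∈ Sstar \ S i, (f (insert a (S i)) - f (S i))
          ≤ ∑ a ∈ Sstar \ S i, (f (S (i+1)) - f (S i) + ε (i+1)) :=
            Finset.sum_le_sum hbd
        _ = ((Sstar \ S i).card : ℝ) * (f (S (i+1)) - f (S i) + ε (i+1)) := by
            rw [Finset.sum_const, nsmul_eq_mul]
    have hcard : ((Sstar \ S i).card : ℝ) ≤ (k:ℝ) := by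
      have : (Sstar \ S i).card ≤ Sstar.card := Finset.card_le_card (Finset.sdiff_subset)
      exact_mod_cast le_trans this hSstar
    have hnn : 0 ≤ f (S (i+1)) - f (S i) + ε (i+1) := by linarith
    have := mul_le_mul_of_nonneg_right hcard hnn
    linarith
  -- main induction
  have key : ∀ i ≤ k, f Sstar - f (S i) ≤ c ^ i * f Sstar + ∑ j ∈ Finset.Icc 1 i, ε j := by
    intro i
    induction i with
    | zero => intro _; simp [hS0, hempty]
    | succ i ih =>
      intro hik
      have hik' : i < k := hik
      have hIH := ih (le_of_lt hik')
      have hstep := step i hik'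
      have hεnn : 0 ≤ ε (i+1) := hε (i+1) (Nat.le_add_left 1 i) hik
      -- g(i+1) ≤ c * g i + ε (i+1)
      have hrec : f Sstar - f (S (i+1)) ≤ c * (f Sstar - f (S i)) + ε (i+1) := by
        have h1 : (1/(k:ℝ)) * (f Sstar - f (S i)) ≤
            (1/(k:ℝ)) * ((k:ℝ) * (f (S (i+1)) - f (S i) + ε (i+1))) :=
          mul_le_mul_of_nonneg_left hstep (by positivity)
        have h2 : (1/(k:ℝ)) * ((k:ℝ) * (f (S (i+1)) - f (S i) + ε (i+1))) =
            f (S (i+1)) - f (S i) + ε (i+1) := by field_simp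
        rw [h2] at h1
        have hexp : c * (f Sstar - f (S i)) =
            (f Sstar - f (S i)) - (1/(k:ℝ)) * (f Sstar - f (S i)) := by
          rw [hc]; ring
        linarith
      have hSumnn : 0 ≤ ∑ j ∈ Finset.Icc 1 i, ε j := by
        apply Finset.sum_nonneg
        intro j hj
        have := Finset.mem_Icc.1 hj
        exact hε j this.1 (le_trans this.2 (le_of_lt hik'))
      have hmul : c * (f Sstar - f (S i)) ≤
          c * (c ^ i * f Sstar + ∑ j ∈ Finset.Icc 1 i, ε j) :=
        mul_le_mul_of_nonneg_left hIH hc0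
      have hsum : ∑ j ∈ Finset.Icc 1 (i+1), ε j =
          (∑ j ∈ Finset.Icc 1 i, ε j) + ε (i+1) := by
        rw [Finset.sum_Icc_succ_top (Nat.le_add_left 1 i)]
      rw [hsum]
      have hcSum : c * (∑ j ∈ Finset.Icc 1 i, ε j) ≤ ∑ j ∈ Finset.Icc 1 i, ε j := by
        nlinarith
      calc f Sstar - f (S (i+1)) ≤ c * (f Sstar - f (S i)) + ε (i+1) := hrec
        _ ≤ c * (c ^ i * f Sstar + ∑ j ∈ Finset.Icc 1 i, ε j) + ε (i+1) := by linarith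
        _ = c ^ (i+1) * f Sstar + c * (∑ j ∈ Finset.Icc 1 i, ε j) + ε (i+1) := by ring
        _ ≤ c ^ (i+1) * f Sstar + ((∑ j ∈ Finset.Icc 1 i, ε j) + ε (i+1)) := by linarith
  have hmain := key k le_rfl
  constructor
  · have : (1 - c ^ k) * f Sstar = f Sstar - c ^ k * f Sstar := by ring
    rw [ge_iff_le, this]
    linarith
  · -- (1-1/k)^k ≤ exp(-1)
    have h1 : c ≤ Real.exp (-(1/(k:ℝ))) := by
      have := Real.add_one_le_exp (-(1/(k:ℝ)))
      rw [hc]; linarith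
    have h2 : c ^ k ≤ (Real.exp (-(1/(k:ℝ)))) ^ k := pow_le_pow_left₀ hc0 h1 k
    have h3 : (Real.exp (-(1/(k:ℝ)))) ^ k = Real.exp (-1) := by
      rw [← Real.exp_nat_mul]
      congr 1
      field_simp
    rw [h3] at h2
    exact mul_le_mul_of_nonneg_right (by linarith) hFnn
end

section
/- Let n, k be positive integers with k ≤ n/3, let H_m denote the m-th harmonic number, and let Δ be a real with 0 < Δ ≤ 1/(8k²). Define f on subsets S of [n] of size at most k by: f(S) = H_{|S|+k} − H_k if S = {1,...,|S|}; f(S) = H_{2k} − H_k − Δ if |S| = k and S ≠ {1,...,k}; and f(S) = H_{|S|+k} − H_k − Δ/k otherwise. Then f is monotone nondecreasing: f(A) ≤ f(B) whenever A ⊆ B with |B| ≤ k. -/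
/-- `H m`: the `m`-th harmonic number as a real. -/
noncomputable def H (m : ℕ) : ℝ := ∑ j ∈ Finset.range m, 1 / ((j : ℝ) + 1)

/-- The set `{1, …, m}` of the first `m` elements of the ground set `Fin n`. -/
def prefixSet (n m : ℕ) : Finset (Fin n) := Finset.univ.filter (fun x => (x : ℕ) < m)

/-- The hard instance `f_{H₀}` defined via harmonic numbers with gap `Δ`. -/
noncomputable def hardF (n k : ℕ) (Δ : ℝ) (S : Finset (Fin n)) : ℝ :=
  if S = prefixSet n S.card then H (S.card + k) - H k
  else if S.card = k then H (2 * k) - H k - Δ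
  else H (S.card + k) - H k - Δ / k

lemma H_mono {a b : ℕ} (h : a ≤ b) : H a ≤ H b := by
  unfold H
  apply Finset.sum_le_sum_of_subset_of_nonneg (Finset.range_subset_range.2 h)
  intro i _ _
  positivity

lemma H_gap {a b : ℕ} (h : a ≤ b) (hb : 0 < b) :
    ((b : ℝ) - a) / b ≤ H b - H a := by
  unfold H
  rw [← Finset.sum_Ico_eq_sub _ h]
  have heq : ((b:ℝ) - a) / b = ∑ _j ∈ Finset.Ico a b, (1 : ℝ) / b := by
    rw [Finset.sum_const, Nat.card_Ico, nsmul_eq_mul, Nat.cast_sub h]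
    ring
  rw [heq]
  apply Finset.sum_le_sum
  intro j hj
  have hjb : j + 1 ≤ b := (Finset.mem_Ico.1 hj).2
  apply one_div_le_one_div_of_le
  · positivity
  · exact_mod_cast hjb

lemma gap_ge {k a b : ℕ} (hk : 0 < k) (hab : a < b) (hbk : b ≤ k) (Δ : ℝ)
    (hΔ : Δ ≤ 1 / (8 * (k : ℝ) ^ 2)) : Δ ≤ H (b + k) - H (a + k) := by
  have hk' : (0:ℝ) < k := by exact_mod_cast hk
  have hk1 : (1:ℝ) ≤ k := by exact_mod_cast hk
  have h1 : Δ ≤ 1 / (2 * (k:ℝ)) :=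
    le_trans hΔ (one_div_le_one_div_of_le (by positivity) (by nlinarith))
  have hba : (1:ℝ) ≤ (b:ℝ) - a := by
    have : (a:ℝ) + 1 ≤ b := by exact_mod_cast hab
    linarith
  have hbk' : (b:ℝ) + k ≤ 2 * k := by
    have : (b:ℝ) ≤ k := by exact_mod_cast hbk
    linarith
  have h2 : (1:ℝ) / (2 * k) ≤ ((b:ℝ) - a) / ((b:ℝ) + k) :=
    div_le_div₀ (by linarith) hba (by positivity) hbk'
  have h3 : ((b:ℝ) - a) / ((b:ℝ) + k) ≤ H (b + k) - H (a + k) := by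
    calc ((b:ℝ) - a) / ((b:ℝ) + k)
        = (((b + k : ℕ) : ℝ) - ((a + k : ℕ) : ℝ)) / ((b + k : ℕ) : ℝ) := by
          push_cast; ring
      _ ≤ H (b + k) - H (a + k) := H_gap (by omega) (by omega)
  linarith

/-- the hard instance is monotone nondecreasing on sets of size at most `k`. -/
theorem stmt_3 (n k : ℕ) (hn : 0 < n) (hk : 0 < k) (hkn : 3 * k ≤ n)
    (Δ : ℝ) (hΔ0 : 0 < Δ) (hΔ : Δ ≤ 1 / (8 * (k : ℝ) ^ 2)) :
    ∀ A B : Finset (Fin n), A ⊆ B → B.card ≤ k → hardF n k Δ A ≤ hardF n k Δ B := by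
  intro A B hAB hBk
  rcases eq_or_ne A B with rfl | hne
  · exact le_rfl
  have hlt : A.card < B.card := Finset.card_lt_card (HasSubset.Subset.ssubset_of_ne hAB hne)
  have hAk : A.card < k := lt_of_lt_of_le hlt hBk
  have hk' : (0:ℝ) < k := by exact_mod_cast hk
  have hk1 : (1:ℝ) ≤ k := by exact_mod_cast hk
  have hdiv : Δ / k ≤ Δ := div_le_self hΔ0.le hk1
  have hdivpos : 0 < Δ / k := div_pos hΔ0 hk'
  have hgap := gap_ge hk hlt hBk Δ hΔ
  have hmono : H (A.card + k) ≤ H (B.card + k) := H_mono (by omega)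
  unfold hardF
  split_ifs with hA hB hBc hAc hB2 hB2c hB3 hB3c
  · linarith
  · -- A prefix, B not prefix, B.card = k
    rw [show 2 * k = B.card + k by omega]
    linarith
  · -- A prefix, B not prefix, B.card < k
    linarith
  · omega
  · omega
  · omega
  · linarith
  · rw [show 2 * k = B.card + k by omega]
    linarith
  · linarith
end

section
/- Let n, k be positive integers with k ≤ n/3 and 0 < Δ ≤ 1/(8k²). Define f on subsets S of [n] of size at most k by: f(S) = H_{|S|+k} − H_k if S = {1,...,|S|}; f(S) = H_{2k} − H_k − Δ if |S| = k and S ≠ {1,...,k}; and f(S) = H_{|S|+k} − H_k − Δ/k otherwise. Then f is submodular on sets of size at most k: for all A ⊆ B with |B| ≤ k−1 and a ∉ B, f(B∪{a}) − f(B) ≤ f(A∪{a}) − f(A). -/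
lemma H_succ (m : ℕ) : H (m + 1) = H m + 1 / ((m : ℝ) + 1) := by
  simp [H, Finset.sum_range_succ]

lemma hardF_le (n k : ℕ) (Δ : ℝ) (hk : 0 < k) (hΔ0 : 0 < Δ) (S : Finset (Fin n)) :
    hardF n k Δ S ≤ H (S.card + k) - H k := by
  have hdk : 0 < Δ / k := div_pos hΔ0 (by exact_mod_cast hk)
  unfold hardF
  split_ifs with h1 h2
  · exact le_refl _
  · rw [h2, two_mul]; linarith
  · linarith

lemma hardF_ge (n k : ℕ) (Δ : ℝ) (hk : 0 < k) (hΔ0 : 0 < Δ) (S : Finset (Fin n))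
    (h : S.card ≠ k) :
    H (S.card + k) - H k - Δ / k ≤ hardF n k Δ S := by
  have hdk : 0 < Δ / k := div_pos hΔ0 (by exact_mod_cast hk)
  unfold hardF
  rcases eq_or_ne S (prefixSet n S.card) with h1 | h1
  · rw [if_pos h1]; linarith
  · rw [if_neg h1, if_neg h]

/-- the hard instance is submodular (diminishing returns) on sets of size ≤ k. -/
theorem stmt_4 (n k : ℕ) (hn : 0 < n) (hk : 0 < k) (hkn : 3 * k ≤ n)
    (Δ : ℝ) (hΔ0 : 0 < Δ) (hΔ : Δ ≤ 1 / (8 * (k : ℝ) ^ 2)) :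
    ∀ A B : Finset (Fin n), A ⊆ B → B.card ≤ k - 1 → ∀ a ∉ B,
      hardF n k Δ (insert a B) - hardF n k Δ B ≤
        hardF n k Δ (insert a A) - hardF n k Δ A := by
  intro A B hAB hB a haB
  by_cases hEq : A = B
  · rw [hEq]
  · have haA : a ∉ A := fun h => haB (hAB h)
    have hpq : A.card < B.card := Finset.card_lt_card (hAB.ssubset_of_ne hEq)
    set p := A.card with hp
    set q := B.card with hq
    have hqk : q < k := by omega
    have hpk : p + 1 < k := by omega
    have hcB : (insert a B).card = q + 1 := Finset.card_insert_of_notMem haB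
    have hcA : (insert a A).card = p + 1 := Finset.card_insert_of_notMem haA
    have hkR : (1 : ℝ) ≤ (k : ℝ) := by exact_mod_cast hk
    have hdk : Δ / k ≤ Δ := by
      calc Δ / k ≤ Δ / 1 := by apply div_le_div_of_nonneg_left hΔ0.le one_pos hkR
        _ = Δ := div_one Δ
    have hdk0 : 0 < Δ / k := div_pos hΔ0 (by linarith)
    -- marginal bounds
    have hHq : H (q + 1 + k) = H (q + k) + 1 / ((q : ℝ) + k + 1) := by
      have := H_succ (q + k)
      rw [show q + 1 + k = q + k + 1 by omega, this]
      push_cast; ring_nf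
    have hHp : H (p + 1 + k) = H (p + k) + 1 / ((p : ℝ) + k + 1) := by
      have := H_succ (p + k)
      rw [show p + 1 + k = p + k + 1 by omega, this]
      push_cast; ring_nf
    have hB1 : hardF n k Δ (insert a B) ≤ H (q + 1 + k) - H k := by
      have := hardF_le n k Δ hk hΔ0 (insert a B); rwa [hcB] at this
    have hB2 : H (q + k) - H k - Δ / k ≤ hardF n k Δ B :=
      hardF_ge n k Δ hk hΔ0 B (by omega)
    have hA1 : H (p + 1 + k) - H k - Δ / k ≤ hardF n k Δ (insert a A) := by
      have := hardF_ge n k Δ hk hΔ0 (insert a A) (by omega); rwa [hcA] at this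
    have hA2 : hardF n k Δ A ≤ H (p + k) - H k :=
      hardF_le n k Δ hk hΔ0 A
    -- arithmetic
    set P : ℝ := (p : ℝ) + k + 1 with hP
    set Q : ℝ := (q : ℝ) + k + 1 with hQ
    have hP0 : (0 : ℝ) < P := by positivity
    have hPQ : P + 1 ≤ Q := by
      have : (p : ℝ) + 1 ≤ q := by exact_mod_cast hpq
      simp only [hP, hQ]; linarith
    have hQ0 : (0 : ℝ) < Q := by linarith
    have hQ2k : Q ≤ 2 * k := by
      have : (q : ℝ) ≤ (k : ℝ) - 1 := by
        have : (q : ℝ) + 1 ≤ k := by exact_mod_cast hqk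
        linarith
      simp only [hQ]; linarith
    have hPQle : P * Q ≤ 4 * (k : ℝ) ^ 2 := by nlinarith
    have hkey : 1 / (4 * (k : ℝ) ^ 2) ≤ 1 / P - 1 / Q := by
      have heq : 1 / P - 1 / Q = (Q - P) / (P * Q) := by
        field_simp
      rw [heq]
      exact div_le_div₀ (by linarith) (by linarith) (by positivity) hPQle
    have h2Δ : 2 * Δ ≤ 1 / (4 * (k : ℝ) ^ 2) := by
      have : 1 / (4 * (k : ℝ) ^ 2) = 2 * (1 / (8 * (k : ℝ) ^ 2)) := by ring
      linarith
    calc hardF n k Δ (insert a B) - hardF n k Δ B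
        ≤ (H (q + 1 + k) - H k) - (H (q + k) - H k - Δ / k) := by linarith
      _ = 1 / Q + Δ / k := by rw [hHq]; simp only [hQ]; ring
      _ ≤ 1 / P - Δ / k := by linarith
      _ = (H (p + 1 + k) - H k - Δ / k) - (H (p + k) - H k) := by
          rw [hHp]; simp only [hP]; ring
      _ ≤ hardF n k Δ (insert a A) - hardF n k Δ A := by linarith
end

section
/- Let t be a nonnegative function on subsets of [n], and for each j let T_j = Σ_{|S|=j} t(S). Fix 1 ≤ i ≤ k with n > 2k. Then Σ over all sequences (x_i,...,x_k) of distinct elements of {k+1,...,n} of [Σ_{j=i}^{k−1} t({1,...,i−1}∪{x_i,...,x_j}) + k²·t({1,...,i−1}∪{x_i,...,x_k})] ≤ Σ_{j=i}^{k−1} ((n−k−j+i−1)!·(j−i+1)!/(n−2k+i−1)!)·T_j + k²·(k−i+1)!·T_k. -/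
/-- `sumCard n t j = T_j`, the sum of `t` over all subsets of `[n]` of cardinality `j`. -/
noncomputable def sumCard (n : ℕ) (t : Finset (Fin n) → ℝ) (j : ℕ) : ℝ :=
  ∑ S ∈ Finset.univ.filter (fun S : Finset (Fin n) => S.card = j), t S

lemma card_filter_lt (n m : ℕ) (h : m ≤ n) :
    (Finset.univ.filter fun v : Fin n => (v : ℕ) < m).card = m := by
  have : (Finset.univ.filter fun v : Fin n => (v : ℕ) < m)
      = (Finset.univ : Finset (Fin m)).map (Fin.castLEEmb h) := by
    ext v
    simp only [Finset.mem_filter, Finset.mem_univ, true_and, Finset.mem_map,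
      Fin.castLEEmb, Function.Embedding.coeFn_mk]
    constructor
    · intro hv; exact ⟨⟨v, hv⟩, rfl⟩
    · rintro ⟨u, rfl⟩; simpa using u.2
  rw [this, Finset.card_map, Finset.card_univ, Fintype.card_fin]

lemma card_filter_ge (n m : ℕ) (h : m ≤ n) :
    (Finset.univ.filter fun v : Fin n => m ≤ (v : ℕ)).card = n - m := by
  have h2 := Finset.card_filter_add_card_filter_not (s := (Finset.univ : Finset (Fin n)))
    (p := fun v : Fin n => (v : ℕ) < m)
  rw [card_filter_lt n m h, Finset.card_univ, Fintype.card_fin] at h2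
  have : (Finset.univ.filter fun v : Fin n => m ≤ (v : ℕ))
      = Finset.univ.filter fun v : Fin n => ¬ (v : ℕ) < m := by
    apply Finset.filter_congr; intro v _; simp [Nat.not_lt]
  rw [this]; omega

lemma fiber_card (n k i j : ℕ) (hn : 2 * k < n) (hi1 : 1 ≤ i) (hij : i ≤ j) (hjk : j ≤ k)
    (S : Finset (Fin n)) :
    ((Finset.univ.filter
        (fun x : Fin (k - i + 1) ↪ Fin n => ∀ p, k ≤ ((x p : Fin n) : ℕ))).filter
      (fun x : Fin (k - i + 1) ↪ Fin n => prefixSet n (i - 1) ∪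
        (Finset.univ.filter (fun p : Fin (k - i + 1) => (p : ℕ) + i ≤ j)).image x = S)).card
    ≤ Nat.factorial (j - i + 1) * Nat.descFactorial (n - k - (j - i + 1)) (k - j) := by
  set F := ((Finset.univ.filter
        (fun x : Fin (k - i + 1) ↪ Fin n => ∀ p, k ≤ ((x p : Fin n) : ℕ))).filter
      (fun x : Fin (k - i + 1) ↪ Fin n => prefixSet n (i - 1) ∪
        (Finset.univ.filter (fun p : Fin (k - i + 1) => (p : ℕ) + i ≤ j)).image x = S)) with hFdef
  rcases F.eq_empty_or_nonempty with hF | ⟨x₀, hx₀⟩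
  · simp [hF]
  have hFmem : ∀ x ∈ F, (∀ p, k ≤ ((x p : Fin n) : ℕ)) ∧ prefixSet n (i - 1) ∪
      (Finset.univ.filter (fun p : Fin (k - i + 1) => (p : ℕ) + i ≤ j)).image x = S := by
    intro x hx
    simpa [hFdef, Finset.mem_filter] using hx
  have key : ∀ x ∈ F,
      (Finset.univ.filter (fun p : Fin (k - i + 1) => (p : ℕ) + i ≤ j)).image x
        = S.filter (fun v : Fin n => k ≤ (v : ℕ)) := by
    intro x hx
    obtain ⟨hval, hSx⟩ := hFmem x hx
    rw [← hSx, Finset.filter_union]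
    have h1 : (prefixSet n (i - 1)).filter (fun v : Fin n => k ≤ (v : ℕ)) = ∅ := by
      rw [Finset.filter_eq_empty_iff]
      intro v hv
      simp only [prefixSet, Finset.mem_filter, Finset.mem_univ, true_and] at hv
      omega
    have h2 : (((Finset.univ.filter (fun p : Fin (k - i + 1) => (p : ℕ) + i ≤ j)).image x).filter
        (fun v : Fin n => k ≤ (v : ℕ)))
        = (Finset.univ.filter (fun p : Fin (k - i + 1) => (p : ℕ) + i ≤ j)).image x := by
      rw [Finset.filter_eq_self]
      intro v hv
      obtain ⟨p, -, rfl⟩ := Finset.mem_image.mp hv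
      exact hval p
    rw [h1, h2, Finset.empty_union]
  set B := S.filter (fun v : Fin n => k ≤ (v : ℕ)) with hBdef
  have hfilt : (Finset.univ.filter (fun p : Fin (k - i + 1) => (p : ℕ) + i ≤ j))
      = Finset.univ.filter (fun p : Fin (k - i + 1) => (p : ℕ) < j - i + 1) := by
    apply Finset.filter_congr; intro p _; omega
  have hBcard : B.card = j - i + 1 := by
    rw [← key x₀ hx₀, Finset.card_image_of_injective _ x₀.injective, hfilt,
      card_filter_lt _ _ (by omega)]
  set D := (Finset.univ.filter fun v : Fin n => k ≤ (v : ℕ)) \ B with hDdef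
  have hBsub : B ⊆ Finset.univ.filter fun v : Fin n => k ≤ (v : ℕ) := by
    intro v hv
    simp only [hBdef, Finset.mem_filter] at hv
    simp [hv.2]
  have hDcard : D.card = n - k - (j - i + 1) := by
    rw [hDdef, Finset.card_sdiff_of_subset hBsub, card_filter_ge n k (by omega), hBcard]
  have hmemB : ∀ x ∈ F, ∀ p : Fin (k - i + 1), (p : ℕ) + i ≤ j → x p ∈ B := by
    intro x hx p hp
    rw [← key x hx]
    exact Finset.mem_image_of_mem x (by simp [hp])
  have hmemD : ∀ x ∈ F, ∀ p : Fin (k - i + 1), ¬ ((p : ℕ) + i ≤ j) → x p ∈ D := by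
    intro x hx p hp
    obtain ⟨hval, -⟩ := hFmem x hx
    simp only [hDdef, Finset.mem_sdiff, Finset.mem_filter, Finset.mem_univ, true_and]
    refine ⟨hval p, ?_⟩
    intro hmem
    rw [← key x hx] at hmem
    obtain ⟨q, hq, hEq⟩ := Finset.mem_image.mp hmem
    simp only [Finset.mem_filter, Finset.mem_univ, true_and] at hq
    have := x.injective hEq
    subst this
    exact hp hq
  have main : F.card ≤ Fintype.card ((Fin (j - i + 1) ↪ ↥B) × (Fin (k - j) ↪ ↥D)) := by
    rw [← Fintype.card_coe F]
    have hlt1 : ∀ q : Fin (j - i + 1), (q : ℕ) < k - i + 1 := fun q => by omega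
    have hlt2 : ∀ q : Fin (k - j), (j - i + 1) + (q : ℕ) < k - i + 1 := fun q => by omega
    refine Fintype.card_le_of_injective (fun x =>
      (⟨fun q => ⟨x.1 ⟨q.val, hlt1 q⟩, hmemB x.1 x.2 _ (by simp; omega)⟩, ?_⟩,
       ⟨fun q => ⟨x.1 ⟨(j - i + 1) + q.val, hlt2 q⟩, hmemD x.1 x.2 _ (by simp; omega)⟩, ?_⟩)) ?_
    · intro q q' h
      have := x.1.injective (congrArg Subtype.val h)
      exact Fin.ext (by simpa using congrArg Fin.val this)
    · intro q q' h
      have := x.1.injective (congrArg Subtype.val h)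
      have h2 := congrArg Fin.val this
      simp only at h2
      exact Fin.ext (by omega)
    · rintro ⟨x, hx⟩ ⟨y, hy⟩ h
      simp only [Prod.mk.injEq] at h
      obtain ⟨h1, h2⟩ := h
      refine Subtype.ext (DFunLike.ext _ _ fun p => ?_)
      by_cases hp : (p : ℕ) < j - i + 1
      · have := congrArg (fun e => ((e : Fin (j - i + 1) ↪ ↥B) ⟨p.val, hp⟩ : Fin n)) h1
        exact this
      · have hq : (p : ℕ) - (j - i + 1) < k - j := by omega
        have := congrArg (fun e => ((e : Fin (k - j) ↪ ↥D) ⟨p.val - (j - i + 1), hq⟩ : Fin n)) h2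
        change x ⟨(j - i + 1) + (p.val - (j - i + 1)), _⟩ = y ⟨(j - i + 1) + (p.val - (j - i + 1)), _⟩ at this
        have hpos : (⟨(j - i + 1) + (p.val - (j - i + 1)), hlt2 ⟨_, hq⟩⟩ : Fin (k - i + 1)) = p :=
          Fin.ext (by simp; omega)
        rwa [hpos] at this
  calc F.card ≤ _ := main
    _ = Nat.factorial (j - i + 1) * Nat.descFactorial (n - k - (j - i + 1)) (k - j) := by
      rw [Fintype.card_prod, Fintype.card_embedding_eq, Fintype.card_embedding_eq,
        Fintype.card_coe, Fintype.card_coe, Fintype.card_fin, Fintype.card_fin,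
        hBcard, hDcard, Nat.descFactorial_self]

lemma sum_bound (n k i j : ℕ) (hn : 2 * k < n) (hi1 : 1 ≤ i) (hij : i ≤ j) (hjk : j ≤ k)
    (t : Finset (Fin n) → ℝ) (ht : ∀ S, 0 ≤ t S) :
    ∑ x ∈ Finset.univ.filter
        (fun x : Fin (k - i + 1) ↪ Fin n => ∀ p, k ≤ ((x p : Fin n) : ℕ)),
      t (prefixSet n (i - 1) ∪
        (Finset.univ.filter (fun p : Fin (k - i + 1) => (p : ℕ) + i ≤ j)).image x)
    ≤ ((Nat.factorial (j - i + 1) * Nat.descFactorial (n - k - (j - i + 1)) (k - j) : ℕ) : ℝ)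
        * sumCard n t j := by
  set A := Finset.univ.filter
      (fun x : Fin (k - i + 1) ↪ Fin n => ∀ p, k ≤ ((x p : Fin n) : ℕ)) with hAdef
  set g := fun x : Fin (k - i + 1) ↪ Fin n => prefixSet n (i - 1) ∪
      (Finset.univ.filter (fun p : Fin (k - i + 1) => (p : ℕ) + i ≤ j)).image x with hgdef
  set N := Nat.factorial (j - i + 1) * Nat.descFactorial (n - k - (j - i + 1)) (k - j) with hNdef
  have himg : A.image g ⊆ Finset.univ.filter (fun S : Finset (Fin n) => S.card = j) := by
    intro S hS
    obtain ⟨x, hx, rfl⟩ := Finset.mem_image.mp hS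
    simp only [hAdef, Finset.mem_filter, Finset.mem_univ, true_and] at hx
    simp only [Finset.mem_filter, Finset.mem_univ, true_and, hgdef]
    have hdisj : Disjoint (prefixSet n (i - 1))
        ((Finset.univ.filter (fun p : Fin (k - i + 1) => (p : ℕ) + i ≤ j)).image x) := by
      rw [Finset.disjoint_left]
      intro v hv hv'
      simp only [prefixSet, Finset.mem_filter, Finset.mem_univ, true_and] at hv
      obtain ⟨p, -, rfl⟩ := Finset.mem_image.mp hv'
      have := hx p
      omega
    rw [Finset.card_union_of_disjoint hdisj,
      Finset.card_image_of_injective _ x.injective]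
    have h1 : (prefixSet n (i - 1)).card = i - 1 := card_filter_lt n (i - 1) (by omega)
    have h2 : (Finset.univ.filter (fun p : Fin (k - i + 1) => (p : ℕ) + i ≤ j)).card
        = j - i + 1 := by
      have : (Finset.univ.filter (fun p : Fin (k - i + 1) => (p : ℕ) + i ≤ j))
          = Finset.univ.filter (fun p : Fin (k - i + 1) => (p : ℕ) < j - i + 1) := by
        apply Finset.filter_congr; intro p _; omega
      rw [this, card_filter_lt _ _ (by omega)]
    rw [h1, h2]; omega
  calc ∑ x ∈ A, t (g x)
      = ∑ S ∈ A.image g, (A.filter fun x => g x = S).card • t S := Finset.sum_comp t g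
    _ ≤ ∑ S ∈ A.image g, (N : ℝ) * t S := by
        apply Finset.sum_le_sum
        intro S hS
        rw [nsmul_eq_mul]
        apply mul_le_mul_of_nonneg_right _ (ht S)
        exact_mod_cast fiber_card n k i j hn hi1 hij hjk S
    _ = (N : ℝ) * ∑ S ∈ A.image g, t S := by rw [Finset.mul_sum]
    _ ≤ (N : ℝ) * sumCard n t j := by
        apply mul_le_mul_of_nonneg_left _ (by positivity)
        exact Finset.sum_le_sum_of_subset_of_nonneg himg (fun S _ _ => ht S)

/-- counting bound for the total mass over all sequences `(x_i,…,x_k)` of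
distinct elements of `{k+1,…,n}` (encoded as embeddings `Fin (k-i+1) ↪ Fin n` whose
values have index at least `k`). -/
theorem stmt_7 (n k i : ℕ) (hk : 1 ≤ k) (hn : 2 * k < n) (hi1 : 1 ≤ i) (hik : i ≤ k)
    (t : Finset (Fin n) → ℝ) (ht : ∀ S, 0 ≤ t S) :
    ∑ x ∈ Finset.univ.filter
        (fun x : Fin (k - i + 1) ↪ Fin n => ∀ p, k ≤ ((x p : Fin n) : ℕ)),
      ((∑ j ∈ Finset.Ico i k,
          t (prefixSet n (i - 1) ∪
            (Finset.univ.filter (fun p : Fin (k - i + 1) => (p : ℕ) + i ≤ j)).image x))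
        + (k : ℝ) ^ 2 *
          t (prefixSet n (i - 1) ∪ (Finset.univ : Finset (Fin (k - i + 1))).image x))
      ≤ (∑ j ∈ Finset.Ico i k,
          ((Nat.factorial (n - k - j + i - 1) * Nat.factorial (j - i + 1) : ℝ)
              / (Nat.factorial (n - 2 * k + i - 1) : ℝ)) * sumCard n t j)
        + (k : ℝ) ^ 2 * (Nat.factorial (k - i + 1) : ℝ) * sumCard n t k := by

  rw [Finset.sum_add_distrib, Finset.sum_comm, ← Finset.mul_sum]
  apply add_le_add
  · apply Finset.sum_le_sum
    intro j hj
    obtain ⟨hij, hjk⟩ := Finset.mem_Ico.mp hj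
    have hcoeff : ((Nat.factorial (n - k - j + i - 1) * Nat.factorial (j - i + 1) : ℝ)
        / (Nat.factorial (n - 2 * k + i - 1) : ℝ))
        = ((Nat.factorial (j - i + 1) * Nat.descFactorial (n - k - (j - i + 1)) (k - j) : ℕ) : ℝ) := by
      rw [div_eq_iff (Nat.cast_ne_zero.mpr (Nat.factorial_ne_zero _))]
      have hm : n - k - (j - i + 1) = n - k - j + i - 1 := by omega
      have hc : k - j ≤ n - k - (j - i + 1) := by omega
      have h2 : n - 2 * k + i - 1 = (n - k - (j - i + 1)) - (k - j) := by omega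
      have hfd := Nat.factorial_mul_descFactorial hc
      have hnat : Nat.factorial (n - k - j + i - 1) * Nat.factorial (j - i + 1)
          = (Nat.factorial (j - i + 1) * Nat.descFactorial (n - k - (j - i + 1)) (k - j))
            * Nat.factorial (n - 2 * k + i - 1) := by
        rw [← hm, h2, mul_assoc, mul_comm (Nat.descFactorial (n - k - (j - i + 1)) (k - j)),
          hfd, mul_comm]
      exact_mod_cast hnat
    rw [hcoeff]
    exact sum_bound n k i j hn hi1 hij (le_of_lt hjk) t ht
  · have huniv : (Finset.univ.filter (fun p : Fin (k - i + 1) => (p : ℕ) + i ≤ k))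
        = (Finset.univ : Finset (Fin (k - i + 1))) := by
      apply Finset.filter_true_of_mem
      intro p _
      have := p.2
      omega
    have hb := sum_bound n k i k hn hi1 hik le_rfl t ht
    rw [huniv] at hb
    have hN : ((Nat.factorial (k - i + 1) * Nat.descFactorial (n - k - (k - i + 1)) (k - k) : ℕ) : ℝ)
        = (Nat.factorial (k - i + 1) : ℝ) := by
      rw [Nat.sub_self, Nat.descFactorial_zero, mul_one]
    rw [hN] at hb
    calc (k : ℝ) ^ 2 * ∑ x ∈ _, t _ ≤ (k : ℝ) ^ 2 * ((Nat.factorial (k - i + 1) : ℝ) * sumCard n t k) :=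
          mul_le_mul_of_nonneg_left hb (by positivity)
      _ = (k : ℝ) ^ 2 * (Nat.factorial (k - i + 1) : ℝ) * sumCard n t k := by ring
end

section
/- Let P and Q be two probability measures on a measurable space and A an event. Then P(A) + Q(Aᶜ) ≥ (1/2)·exp(−KL(P‖Q)). -/
open MeasureTheory

/-- Bretagnolle–Huber inequality, with
`KL(P‖Q) = ∫ log (dP/dQ) dP = ∫ llr P Q dP`. -/
theorem stmt_9 {Ω : Type*} [MeasurableSpace Ω] (P Q : Measure Ω)
    [IsProbabilityMeasure P] [IsProbabilityMeasure Q]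
    (hPQ : P ≪ Q) (hint : Integrable (llr P Q) P)
    (A : Set Ω) (hA : MeasurableSet A) :
    (P A).toReal + (Q Aᶜ).toReal ≥ (1 / 2) * Real.exp (-∫ x, llr P Q x ∂P) := by
  set f : Ω → ℝ := fun x ↦ (P.rnDeriv Q x).toReal with hf_def
  have hf_meas : Measurable f := (Measure.measurable_rnDeriv P Q).ennreal_toReal
  have hf_nonneg : ∀ x, 0 ≤ f x := fun x ↦ ENNReal.toReal_nonneg
  have hf_int : Integrable f Q := Measure.integrable_toReal_rnDeriv
  have hf_int1 : ∫ x, f x ∂Q = 1 := by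
    rw [hf_def, Measure.integral_toReal_rnDeriv hPQ]; simp
  -- integrability of min, max, sqrt
  have hmin_int : Integrable (fun x ↦ min (f x) 1) Q := by
    refine Integrable.mono' (integrable_const (1 : ℝ))
      (hf_meas.min measurable_const).aestronglyMeasurable ?_
    filter_upwards with x
    rw [Real.norm_of_nonneg (le_min (hf_nonneg x) zero_le_one)]
    exact min_le_right _ _
  have hmax_int : Integrable (fun x ↦ max (f x) 1) Q := by
    refine Integrable.mono' (hf_int.add (integrable_const (1 : ℝ)))
      (hf_meas.max measurable_const).aestronglyMeasurable ?_
    filter_upwards with x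
    rw [Real.norm_of_nonneg (le_max_of_le_right zero_le_one)]
    show max (f x) 1 ≤ f x + 1
    exact max_le (by linarith) (by linarith [hf_nonneg x])
  have hsqrt_le : ∀ x, Real.sqrt (f x) ≤ f x + 1 := by
    intro x
    nlinarith [Real.sq_sqrt (hf_nonneg x), Real.sqrt_nonneg (f x)]
  have hsqrt_int : Integrable (fun x ↦ Real.sqrt (f x)) Q := by
    refine Integrable.mono' (hf_int.add (integrable_const (1 : ℝ)))
      (hf_meas.sqrt.aestronglyMeasurable) ?_
    filter_upwards with x
    rw [Real.norm_of_nonneg (Real.sqrt_nonneg _)]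
    exact hsqrt_le x
  set m : ℝ := ∫ x, min (f x) 1 ∂Q with hm_def
  set M : ℝ := ∫ x, max (f x) 1 ∂Q with hM_def
  set S : ℝ := ∫ x, Real.sqrt (f x) ∂Q with hS_def
  have hm0 : 0 ≤ m := integral_nonneg fun x ↦ le_min (hf_nonneg x) zero_le_one
  have hM0 : 0 ≤ M := integral_nonneg fun x ↦ le_max_of_le_right zero_le_one
  have hS0 : 0 ≤ S := integral_nonneg fun x ↦ Real.sqrt_nonneg _
  -- M = 2 - m
  have hM : M = 2 - m := by
    have h : ∀ x, max (f x) 1 = f x + 1 - min (f x) 1 := by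
      intro x
      have := max_add_min (f x) 1
      linarith
    calc M = ∫ x, (f x + 1 - min (f x) 1) ∂Q := by
            rw [hM_def]; exact integral_congr_ae (Filter.Eventually.of_forall h)
      _ = (∫ x, (f x + 1) ∂Q) - m := integral_sub (hf_int.add (integrable_const 1)) hmin_int
      _ = 2 - m := by
            rw [integral_add hf_int (integrable_const 1), hf_int1]
            norm_num
  -- Cauchy-Schwarz : S ^ 2 ≤ m * M
  have hCS : S ^ 2 ≤ m * M := by
    have hconj : Real.HolderConjugate 2 2 := Real.holderConjugate_iff.mpr ⟨one_lt_two, by norm_num⟩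
    have hmem_min : MemLp (fun x ↦ Real.sqrt (min (f x) 1)) (ENNReal.ofReal 2) Q := by
      have h2 : ENNReal.ofReal 2 = 2 := by norm_num
      rw [h2, memLp_two_iff_integrable_sq
        (hf_meas.min measurable_const).sqrt.aestronglyMeasurable]
      refine hmin_int.congr ?_
      filter_upwards with x
      rw [Real.sq_sqrt (le_min (hf_nonneg x) zero_le_one)]
    have hmem_max : MemLp (fun x ↦ Real.sqrt (max (f x) 1)) (ENNReal.ofReal 2) Q := by
      have h2 : ENNReal.ofReal 2 = 2 := by norm_num
      rw [h2, memLp_two_iff_integrable_sq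
        (hf_meas.max measurable_const).sqrt.aestronglyMeasurable]
      refine hmax_int.congr ?_
      filter_upwards with x
      rw [Real.sq_sqrt (le_max_of_le_right zero_le_one)]
    have h := integral_mul_le_Lp_mul_Lq_of_nonneg hconj
      (Filter.Eventually.of_forall fun x ↦ Real.sqrt_nonneg (min (f x) 1))
      (Filter.Eventually.of_forall fun x ↦ Real.sqrt_nonneg (max (f x) 1))
      hmem_min hmem_max
    have hprod : ∀ x, Real.sqrt (min (f x) 1) * Real.sqrt (max (f x) 1)
        = Real.sqrt (f x) := by
      intro x
      rw [← Real.sqrt_mul (le_min (hf_nonneg x) zero_le_one), min_mul_max, mul_one]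
    have hsq : ∀ (a : ℝ), 0 ≤ a → Real.sqrt a ^ (2 : ℝ) = a := by
      intro a ha
      rw [show ((2 : ℝ) = ((2 : ℕ) : ℝ)) by norm_num, Real.rpow_natCast,
        Real.sq_sqrt ha]
    have hL : ∫ x, Real.sqrt (min (f x) 1) * Real.sqrt (max (f x) 1) ∂Q = S := by
      rw [hS_def]; exact integral_congr_ae (Filter.Eventually.of_forall hprod)
    have hR1 : ∫ x, Real.sqrt (min (f x) 1) ^ (2 : ℝ) ∂Q = m := by
      rw [hm_def]
      exact integral_congr_ae (Filter.Eventually.of_forall fun x ↦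
        hsq _ (le_min (hf_nonneg x) zero_le_one))
    have hR2 : ∫ x, Real.sqrt (max (f x) 1) ^ (2 : ℝ) ∂Q = M := by
      rw [hM_def]
      exact integral_congr_ae (Filter.Eventually.of_forall fun x ↦
        hsq _ (le_max_of_le_right zero_le_one))
    rw [hL, hR1, hR2] at h
    have hS_le : S ≤ m ^ ((1 : ℝ)/2) * M ^ ((1 : ℝ)/2) := by
      convert h using 3
    calc S ^ 2 ≤ (m ^ ((1 : ℝ)/2) * M ^ ((1 : ℝ)/2)) ^ 2 := by
          apply pow_le_pow_left₀ hS0 hS_le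
      _ = m * M := by
          rw [mul_pow, ← Real.rpow_natCast (m ^ ((1:ℝ)/2)) 2,
            ← Real.rpow_natCast (M ^ ((1:ℝ)/2)) 2,
            ← Real.rpow_mul hm0, ← Real.rpow_mul hM0]
          norm_num
  -- relating S to the llr integral
  have hg_eq : (fun x ↦ f x • Real.exp (-(1/2) * llr P Q x)) =ᵐ[Q]
      fun x ↦ Real.sqrt (f x) := by
    filter_upwards with x
    by_cases h0 : f x = 0
    · simp [h0]
    · have hpos : 0 < f x := lt_of_le_of_ne (hf_nonneg x) (Ne.symm h0)
      have hllr : llr P Q x = Real.log (f x) := rfl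
      rw [hllr, smul_eq_mul]
      rw [show (-(1/2) * Real.log (f x)) = Real.log (f x) * (-(1/2)) by ring,
        ← Real.rpow_def_of_pos hpos]
      rw [Real.sqrt_eq_rpow]
      nth_rewrite 1 [← Real.rpow_one (f x)]
      rw [← Real.rpow_add hpos]
      norm_num
  have hexp_int : Integrable (fun x ↦ Real.exp (-(1/2) * llr P Q x)) P := by
    rw [← integrable_rnDeriv_smul_iff hPQ]
    exact hsqrt_int.congr hg_eq.symm
  have hSP : ∫ x, Real.exp (-(1/2) * llr P Q x) ∂P = S := by
    rw [← integral_rnDeriv_smul hPQ, hS_def]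
    exact integral_congr_ae hg_eq
  -- Jensen
  have hjensen : Real.exp (∫ x, -(1/2) * llr P Q x ∂P) ≤ S := by
    rw [← hSP]
    exact convexOn_exp.map_integral_le Real.continuous_exp.continuousOn
      isClosed_univ (Filter.Eventually.of_forall fun x ↦ Set.mem_univ _)
      (hint.const_mul _) hexp_int
  have hKL : ∫ x, -(1/2) * llr P Q x ∂P = -(1/2) * ∫ x, llr P Q x ∂P :=
    integral_const_mul _ _
  have hexp_le : Real.exp (-∫ x, llr P Q x ∂P) ≤ S ^ 2 := by
    have : Real.exp (-∫ x, llr P Q x ∂P)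
        = Real.exp (-(1/2) * ∫ x, llr P Q x ∂P) ^ 2 := by
      rw [← Real.exp_nat_mul]; ring_nf
    rw [this, ← hKL]
    exact pow_le_pow_left₀ (Real.exp_nonneg _) hjensen 2
  -- m ≤ P A + Q Aᶜ
  have hPA : ∫ x in A, f x ∂Q = (P A).toReal := Measure.setIntegral_toReal_rnDeriv hPQ A
  have hm_le : m ≤ (P A).toReal + (Q Aᶜ).toReal := by
    have hsplit : m = (∫ x in A, min (f x) 1 ∂Q) + ∫ x in Aᶜ, min (f x) 1 ∂Q :=
      (integral_add_compl hA hmin_int).symm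
    have h1 : ∫ x in A, min (f x) 1 ∂Q ≤ (P A).toReal := by
      rw [← hPA]
      exact setIntegral_mono_on hmin_int.integrableOn hf_int.integrableOn hA
        fun x _ ↦ min_le_left _ _
    have h2 : ∫ x in Aᶜ, min (f x) 1 ∂Q ≤ (Q Aᶜ).toReal := by
      have : ∫ x in Aᶜ, (1 : ℝ) ∂Q = (Q Aᶜ).toReal := by
        simp [setIntegral_const, measureReal_def]
      rw [← this]
      exact setIntegral_mono_on hmin_int.integrableOn (integrable_const 1).integrableOn
        hA.compl fun x _ ↦ min_le_right _ _
    linarith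
  -- combine
  have h2m : Real.exp (-∫ x, llr P Q x ∂P) ≤ 2 * m := by
    calc Real.exp (-∫ x, llr P Q x ∂P) ≤ S ^ 2 := hexp_le
      _ ≤ m * M := hCS
      _ = m * (2 - m) := by rw [hM]
      _ ≤ 2 * m := by nlinarith
  linarith
end

section
/- Let f: Finset (Fin n) → ℝ be monotone nondecreasing and submodular with f(∅) = 0, let c := 1 − min over S and a∉S of (f(S∪{a}) − f(S))/f({a}) (assuming f({a}) > 0 for all a), let (a_1,...,a_l) be a sequence of distinct elements with S^(i) := {a_1,...,a_i}, and let T be any set. Then f(T) ≤ c·Σ_{i: a_i ∈ S^(l)∖T} (f(S^(i)) − f(S^(i−1))) + Σ_{i: a_i ∈ S^(l)∩T} (f(S^(i)) − f(S^(i−1))) + Σ_{a ∈ T∖S^(l)} (f(S^(l)∪{a}) − f(S^(l))). -/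
/-- Lemma 2.1 of Nemhauser–Wolsey–Fisher: curvature bound. -/
theorem stmt_15 (n l : ℕ) (f : Finset (Fin n) → ℝ)
    (hmono : ∀ A B : Finset (Fin n), A ⊆ B → f A ≤ f B)
    (hsub : ∀ A B : Finset (Fin n), f (A ∪ B) + f (A ∩ B) ≤ f A + f B)
    (hempty : f ∅ = 0)
    (hpos : ∀ a : Fin n, 0 < f {a})
    (c : ℝ)
    (hc : c = 1 - sInf {r : ℝ | ∃ (S : Finset (Fin n)) (a : Fin n), a ∉ S ∧
        r = (f (insert a S) - f S) / f {a}})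
    (a : ℕ → Fin n) (hinj : Set.InjOn a (Finset.Icc 1 l))
    (S : ℕ → Finset (Fin n)) (hS : ∀ j, S j = (Finset.Icc 1 j).image a)
    (T : Finset (Fin n)) :
    f T ≤ c * (∑ i ∈ (Finset.Icc 1 l).filter (fun i => a i ∉ T), (f (S i) - f (S (i - 1))))
        + (∑ i ∈ (Finset.Icc 1 l).filter (fun i => a i ∈ T), (f (S i) - f (S (i - 1))))
        + ∑ x ∈ T \ S l, (f (insert x (S l)) - f (S l)) := by
  rcases Nat.eq_zero_or_pos n with hn | hn
  · have := (a 0).2; omega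
  have a0 : Fin n := ⟨0, hn⟩
  set R : Set ℝ := {r : ℝ | ∃ (S : Finset (Fin n)) (a : Fin n), a ∉ S ∧
      r = (f (insert a S) - f S) / f {a}} with hR
  have hRne : R.Nonempty := ⟨(f (insert a0 ∅) - f ∅) / f {a0}, ∅, a0, by simp, rfl⟩
  have hRbd : ∀ r ∈ R, (0:ℝ) ≤ r := by
    rintro r ⟨A, x, hx, rfl⟩
    exact div_nonneg (sub_nonneg.2 (hmono _ _ (Finset.subset_insert _ _))) (hpos x).le
  have h1c : 1 - c = sInf R := by rw [hc]; ring
  have h1c_nonneg : (0:ℝ) ≤ 1 - c := h1c ▸ le_csInf hRne hRbd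
  -- key curvature bound
  have hkey : ∀ (A : Finset (Fin n)) (x : Fin n), x ∉ A →
      (1 - c) * f {x} ≤ f (insert x A) - f A := by
    intro A x hx
    have hmem : (f (insert x A) - f A) / f {x} ∈ R := ⟨A, x, hx, rfl⟩
    have h := csInf_le ⟨0, hRbd⟩ hmem
    rw [h1c]
    calc sInf R * f {x} ≤ ((f (insert x A) - f A) / f {x}) * f {x} :=
          mul_le_mul_of_nonneg_right h (hpos x).le
      _ = f (insert x A) - f A := div_mul_cancel₀ _ (hpos x).ne'
  -- marginal monotonicity
  have hmarg : ∀ (A B : Finset (Fin n)) (x : Fin n), A ⊆ B → x ∉ B →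
      f (insert x B) - f B ≤ f (insert x A) - f A := by
    intro A B x hAB hxB
    have h := hsub (insert x A) B
    have h1 : insert x A ∪ B = insert x B := by
      rw [Finset.insert_union, Finset.union_eq_right.2 hAB]
    have h2 : insert x A ∩ B = A := by
      rw [Finset.insert_inter_of_notMem hxB, Finset.inter_eq_left.2 hAB]
    rw [h1, h2] at h
    linarith
  have hsingle : ∀ (A : Finset (Fin n)) (x : Fin n), f (insert x A) - f A ≤ f {x} := by
    intro A x
    by_cases hx : x ∈ A
    · rw [Finset.insert_eq_self.2 hx]
      simpa using (hpos x).le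
    · have h := hmarg ∅ A x (Finset.empty_subset _) hx
      simpa [hempty] using h
  -- upper bound by submodularity
  have hupper : ∀ (U C : Finset (Fin n)), (∀ x ∈ U, x ∉ C) →
      f (C ∪ U) ≤ f C + ∑ x ∈ U, (f (insert x C) - f C) := by
    intro U
    induction U using Finset.induction_on with
    | empty => intro C _; simp
    | @insert y U' hy ih =>
      intro C hU
      have hyC : y ∉ C := hU y (Finset.mem_insert_self _ _)
      have hyCU : y ∉ C ∪ U' := by simp [hyC, hy]
      have h1 : f (insert y (C ∪ U')) - f (C ∪ U') ≤ f (insert y C) - f C :=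
        hmarg C (C ∪ U') y Finset.subset_union_left hyCU
      have h2 := ih C (fun x hx => hU x (Finset.mem_insert_of_mem hx))
      rw [Finset.union_insert, Finset.sum_insert hy]
      linarith
  -- lower bound by curvature
  have hlower : ∀ (V T' : Finset (Fin n)),
      f T' + (1 - c) * ∑ x ∈ V \ T', f {x} ≤ f (T' ∪ V) := by
    intro V
    induction V using Finset.induction_on with
    | empty => intro T'; simp
    | @insert y V' hy ih =>
      intro T'
      by_cases hyT : y ∈ T'
      · rw [Finset.insert_sdiff_of_mem _ hyT, Finset.union_insert,
          Finset.insert_eq_self.2 (Finset.mem_union_left _ hyT)]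
        exact ih T'
      · have hy2 : y ∉ V' \ T' := fun h => hy (Finset.mem_sdiff.1 h).1
        have hy3 : y ∉ T' ∪ V' := by simp [hyT, hy]
        rw [Finset.insert_sdiff_of_notMem _ hyT, Finset.sum_insert hy2,
          Finset.union_insert]
        have h1 := hkey (T' ∪ V') y hy3
        have h2 := ih T'
        have h3 : (1 - c) * (f {y} + ∑ x ∈ V' \ T', f {x})
            = (1 - c) * f {y} + (1 - c) * ∑ x ∈ V' \ T', f {x} := by ring
        linarith
  -- step structure of S
  have hstep : ∀ i, 1 ≤ i → S i = insert (a i) (S (i - 1)) := by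
    intro i hi
    rw [hS, hS]
    have h : Finset.Icc 1 i = insert i (Finset.Icc 1 (i - 1)) := by
      ext j; simp only [Finset.mem_Icc, Finset.mem_insert]; omega
    rw [h, Finset.image_insert]
  have hnotmem : ∀ i, 1 ≤ i → i ≤ l → a i ∉ S (i - 1) := by
    intro i h1 h2 hmem
    rw [hS] at hmem
    obtain ⟨j, hj, hja⟩ := Finset.mem_image.1 hmem
    rw [Finset.mem_Icc] at hj
    have hij := hinj (by simp only [Finset.coe_Icc, Set.mem_Icc]; omega)
      (by simp only [Finset.coe_Icc, Set.mem_Icc]; omega) hja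
    omega
  have hΔle : ∀ i ∈ Finset.Icc 1 l, f (S i) - f (S (i - 1)) ≤ f {a i} := by
    intro i hi
    rw [Finset.mem_Icc] at hi
    rw [hstep i hi.1]
    exact hsingle _ _
  have hΔnn : ∀ i ∈ Finset.Icc 1 l, 0 ≤ f (S i) - f (S (i - 1)) := by
    intro i hi
    rw [Finset.mem_Icc] at hi
    rw [hstep i hi.1]
    exact sub_nonneg.2 (hmono _ _ (Finset.subset_insert _ _))
  -- telescoping
  have htel : ∀ m, ∑ i ∈ Finset.Icc 1 m, (f (S i) - f (S (i - 1))) = f (S m) := by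
    intro m
    induction m with
    | zero => simp [hS 0, hempty]
    | succ m ih =>
      rw [Finset.sum_Icc_succ_top (by omega), ih]
      simp
  -- sum over S l \ T
  have himg : S l \ T = ((Finset.Icc 1 l).filter (fun i => a i ∉ T)).image a := by
    rw [hS]
    ext x
    simp only [Finset.mem_sdiff, Finset.mem_image, Finset.mem_filter]
    constructor
    · rintro ⟨⟨j, hj, rfl⟩, hxT⟩
      exact ⟨j, ⟨hj, hxT⟩, rfl⟩
    · rintro ⟨j, ⟨hj, hjT⟩, rfl⟩
      exact ⟨⟨j, hj, rfl⟩, hjT⟩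
  have hsumimg : ∑ x ∈ S l \ T, f {x}
      = ∑ i ∈ (Finset.Icc 1 l).filter (fun i => a i ∉ T), f {a i} := by
    rw [himg]
    refine Finset.sum_image ?_
    intro i hi j hj hij
    exact hinj (Finset.mem_coe.2 (Finset.mem_of_mem_filter _ hi))
      (Finset.mem_coe.2 (Finset.mem_of_mem_filter _ hj)) hij
  -- main chain
  have main1 : f T + (1 - c) *
      ∑ i ∈ (Finset.Icc 1 l).filter (fun i => a i ∉ T), (f (S i) - f (S (i - 1)))
      ≤ f (T ∪ S l) := by
    have h1 := hlower (S l) T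
    have h2 : ∑ i ∈ (Finset.Icc 1 l).filter (fun i => a i ∉ T), (f (S i) - f (S (i - 1)))
        ≤ ∑ i ∈ (Finset.Icc 1 l).filter (fun i => a i ∉ T), f {a i} :=
      Finset.sum_le_sum fun i hi => hΔle i (Finset.mem_of_mem_filter _ hi)
    have h3 := mul_le_mul_of_nonneg_left h2 h1c_nonneg
    rw [hsumimg] at h1
    linarith
  have main2 : f (T ∪ S l) ≤ f (S l) + ∑ x ∈ T \ S l, (f (insert x (S l)) - f (S l)) := by
    have h := hupper (T \ S l) (S l) (fun x hx => (Finset.mem_sdiff.1 hx).2)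
    rw [Finset.union_sdiff_self_eq_union, Finset.union_comm] at h
    exact h
  have hsplit : ∑ i ∈ (Finset.Icc 1 l).filter (fun i => a i ∈ T), (f (S i) - f (S (i - 1)))
      + ∑ i ∈ (Finset.Icc 1 l).filter (fun i => a i ∉ T), (f (S i) - f (S (i - 1)))
      = f (S l) := by
    rw [Finset.sum_filter_add_sum_filter_not]
    exact htel l
  linarith
end
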